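/- Let (X,d) be a complete metric space and T : X → X a Chatterjea contraction, i.e. there exists α ∈ [0, 1/2) such that d(Tx,Ty) ≤ α·[d(x,Ty) + d(y,Tx)] for all x, y ∈ X. Then T has a unique fixed point. -/
import Mathlib

open Filter Topology

theorem stmt_6 {X : Type*} [MetricSpace X] [CompleteSpace X] [Nonempty X]
    (T : X → X) (α : ℝ) (hα0 : 0 ≤ α) (hα1 : α < 1 / 2)
    (h : ∀ x y : X, dist (T x) (T y) ≤ α * (dist x (T y) + dist y (T x))) :
    ∃! u : X, T u = u := by
  obtain ⟨x0⟩ := ‹Nonempty X›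
  set f : ℕ → X := fun n => T^[n] x0 with hf
  have h1α : 0 < 1 - α := by linarith
  set β := α / (1 - α) with hβ
  have hβ0 : 0 ≤ β := div_nonneg hα0 h1α.le
  have hβ1 : β < 1 := (div_lt_one h1α).2 (by linarith)
  have hstep : ∀ n, T (f n) = f (n + 1) := fun n =>
    (Function.iterate_succ_apply' T n x0).symm
  have key : ∀ n, dist (f (n+1)) (f (n+2)) ≤ β * dist (f n) (f (n+1)) := by
    intro n
    have h2 := h (f n) (f (n+1))
    rw [hstep n, hstep (n+1)] at h2
    simp only [dist_self, add_zero] at h2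
    have tri : dist (f n) (f (n+2)) ≤ dist (f n) (f (n+1)) + dist (f (n+1)) (f (n+2)) :=
      dist_triangle _ _ _
    rw [hβ, div_mul_eq_mul_div, le_div_iff₀ h1α]
    nlinarith
  have geom : ∀ n, dist (f n) (f (n+1)) ≤ dist (f 0) (f 1) * β ^ n := by
    intro n
    induction n with
    | zero => simp
    | succ n ih =>
      calc dist (f (n+1)) (f (n+2)) ≤ β * dist (f n) (f (n+1)) := key n
        _ ≤ β * (dist (f 0) (f 1) * β ^ n) := by nlinarith
        _ = dist (f 0) (f 1) * β ^ (n+1) := by ring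
  have hcau : CauchySeq f :=
    cauchySeq_of_le_geometric β (dist (f 0) (f 1)) hβ1 (fun n => geom n)
  obtain ⟨u, hu⟩ := cauchySeq_tendsto_of_complete hcau
  have h1 : Tendsto (fun n => f (n+1)) atTop (𝓝 u) := hu.comp (tendsto_add_atTop_nat 1)
  have h2 : Tendsto (fun n => f (n+2)) atTop (𝓝 u) := hu.comp (tendsto_add_atTop_nat 2)
  have hb : ∀ n, dist (T u) u ≤
      α * (dist u (f (n+2)) + dist (f (n+1)) (T u)) + dist (f (n+2)) u := by
    intro n
    have h3 := h u (f (n+1))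
    rw [hstep (n+1)] at h3
    calc dist (T u) u ≤ dist (T u) (f (n+2)) + dist (f (n+2)) u := dist_triangle _ _ _
      _ ≤ α * (dist u (f (n+2)) + dist (f (n+1)) (T u)) + dist (f (n+2)) u := by
          linarith
  have tendA : Tendsto (fun n => dist u (f (n+2))) atTop (𝓝 0) := by
    simpa using (tendsto_const_nhds (x := u)).dist h2
  have tendB : Tendsto (fun n => dist (f (n+1)) (T u)) atTop (𝓝 (dist u (T u))) :=
    h1.dist (tendsto_const_nhds (x := T u))
  have tendC : Tendsto (fun n => dist (f (n+2)) u) atTop (𝓝 0) := by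
    simpa using h2.dist (tendsto_const_nhds (x := u))
  have tendAll : Tendsto
      (fun n => α * (dist u (f (n+2)) + dist (f (n+1)) (T u)) + dist (f (n+2)) u)
      atTop (𝓝 (α * (0 + dist u (T u)) + 0)) :=
    (tendsto_const_nhds.mul (tendA.add tendB)).add tendC
  have hle : dist (T u) u ≤ α * (0 + dist u (T u)) + 0 := ge_of_tendsto' tendAll hb
  have hdc : dist u (T u) = dist (T u) u := dist_comm _ _
  have hfix : T u = u := by
    rw [← dist_eq_zero]
    nlinarith [(dist_nonneg : (0:ℝ) ≤ dist (T u) u)]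
  refine ⟨u, hfix, fun v hv => ?_⟩
  have h4 := h v u
  rw [hv, hfix] at h4
  have hdc2 : dist u v = dist v u := dist_comm _ _
  rw [← dist_eq_zero]
  nlinarith [(dist_nonneg : (0:ℝ) ≤ dist v u)]
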